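/- Let (W, S) be a Coxeter system, X, Y ⊆ S, W_X, W_Y the standard parabolic subgroups, and let σ ∈ W be the unique minimal-length element of a double coset W_X σ W_Y. Then W_X ∩ σW_Yσ⁻¹ is a standard parabolic subgroup of (W_X, X), and for any minimal-length coset representative τ of W_X/(W_X ∩ σW_Yσ⁻¹) and any υ ∈ W_Y one has ℓ(τσυ) = ℓ(τ) + ℓ(σ) + ℓ(υ). -/

import Mathlib

namespace CoxDC
open List CoxeterSystem

variable {B : Type*} {W : Type*} [Group W] [DecidableEq W] {M : CoxeterMatrix B}
  (cs : CoxeterSystem M W)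

local prefix:100 "s" => cs.simple
local prefix:100 "π" => cs.wordProd
local prefix:100 "ℓ" => cs.length
local prefix:100 "ris" => cs.rightInvSeq

set_option linter.unusedSectionVars false

lemma ris_cons (i : B) (ω : List B) :
    ris (i :: ω) = ((π ω)⁻¹ * s i * π ω) :: ris ω := rfl

lemma ris_append (ω ω' : List B) :
    ris (ω ++ ω') = (ris ω).map (fun t => (π ω')⁻¹ * t * π ω') ++ ris ω' := by
  induction ω with
  | nil => simp [rightInvSeq]
  | cons i ω ih =>
      rw [cons_append, ris_cons, ris_cons, ih]
      simp [wordProd_append, mul_assoc, mul_inv_rev]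

lemma simple_conj_eq_iff (i : B) (t : W) :
    (s i * t * s i = s i) ↔ t = s i := by
  constructor
  · intro h
    have := congrArg (fun z => s i * z * s i) h
    simp only [← mul_assoc, cs.simple_mul_simple_self, one_mul] at this
    rw [mul_assoc, cs.simple_mul_simple_self, mul_one] at this
    exact this
  · rintro rfl
    rw [cs.simple_mul_simple_self, one_mul]

lemma simple_conj_cancel (i : B) (t : W) : s i * (s i * t * s i) * s i = t := by
  simp only [← mul_assoc, cs.simple_mul_simple_self, one_mul]
  rw [mul_assoc, cs.simple_mul_simple_self, mul_one]

/-- The sign-flipping permutation attached to a simple generator. -/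
def perm (i : B) : Equiv.Perm (W × ℤˣ) :=
  Function.Involutive.toPerm
    (fun p => (cs.simple i * p.1 * cs.simple i, if p.1 = cs.simple i then -p.2 else p.2))
    (by
      rintro ⟨t, e⟩
      dsimp only
      by_cases h : t = s i
      · rw [if_pos h, if_pos (by rw [h]; rw [cs.simple_mul_simple_self, one_mul])]
        rw [Prod.mk.injEq]
        exact ⟨simple_conj_cancel cs i t, neg_neg e⟩
      · rw [if_neg h, if_neg (fun hh => h ((simple_conj_eq_iff cs i t).mp hh))]
        rw [Prod.mk.injEq]
        exact ⟨simple_conj_cancel cs i t, rfl⟩)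

lemma perm_apply (i : B) (p : W × ℤˣ) :
    perm cs i p = (cs.simple i * p.1 * cs.simple i, if p.1 = cs.simple i then -p.2 else p.2) := by
  simp only [perm, Function.Involutive.coe_toPerm]
  rfl

lemma prod_map_perm_apply (ω : List B) (t : W) (ε : ℤˣ) :
    (List.map (perm cs) ω).prod (t, ε)
      = (π ω * t * (π ω)⁻¹, (-1 : ℤˣ) ^ ((ris ω).count t) * ε) := by
  induction ω with
  | nil => simp [rightInvSeq]
  | cons i ω ih =>
      rw [map_cons, prod_cons, Equiv.Perm.mul_apply, ih, perm_apply, ris_cons, count_cons]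
      have hfst : s i * (π ω * t * (π ω)⁻¹) * s i = π (i :: ω) * t * (π (i :: ω))⁻¹ := by
        rw [cs.wordProd_cons]
        simp [mul_assoc, mul_inv_rev, cs.inv_simple]
      rw [hfst]
      have hcond : (π ω * t * (π ω)⁻¹ = s i) ↔ ((π ω)⁻¹ * s i * π ω == t) = true := by
        rw [beq_iff_eq]
        constructor
        · intro h; rw [← h]; group
        · intro h; rw [← h]; group
      by_cases h : π ω * t * (π ω)⁻¹ = s i
      · rw [if_pos h, if_pos (hcond.mp h), pow_succ, mul_neg_one, neg_mul]
      · rw [if_neg h, if_neg (fun hh => h (hcond.mpr hh)), add_zero]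

lemma prod_map_perm_alternatingWord (i j : B) (m : ℕ) :
    (List.map (perm cs) (alternatingWord i j (2 * m))).prod = (perm cs i * perm cs j) ^ m := by
  induction m with
  | zero => simp [alternatingWord]
  | succ m ih =>
      have h2 : 2 * (m + 1) = (2 * m + 1) + 1 := by ring
      rw [h2, alternatingWord_succ' i j, alternatingWord_succ' i j]
      have hodd : ¬ Even (2 * m + 1) := by simp [Nat.even_add_one, parity_simps]
      have heven : Even (2 * m) := even_two_mul m
      rw [if_neg hodd, if_pos heven, map_cons, map_cons, prod_cons, prod_cons, ih, pow_succ',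
        mul_assoc]

lemma exists_left_factor (i j : B) :
    ∃ q : W, ∀ L : ℕ,
      π (alternatingWord i j (L + M i j)) = q * π (alternatingWord i j L) := by
  set m := M i j with hm
  set r := s i * s j with hr
  have hrm : r ^ m = 1 := cs.simple_mul_simple_pow i j
  have hy : ∀ n : ℕ, s j * r ^ n = (r ^ n)⁻¹ * s j := by
    intro n
    have hbase : SemiconjBy (s j) r r⁻¹ := by
      unfold SemiconjBy
      rw [hr, mul_inv_rev, cs.inv_simple, cs.inv_simple, ← mul_assoc]
    have := (hbase.pow_right n).eq
    rwa [inv_pow] at this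
  have halt : ∀ n : ℕ, π (alternatingWord i j n)
      = (if Even n then 1 else s j) * r ^ (n / 2) := fun n =>
    cs.prod_alternatingWord_eq_mul_pow i j n
  rcases Nat.even_or_odd m with hme | hmo
  · -- m even
    have hm2 : m % 2 = 0 := Nat.even_iff.mp hme
    have hsq : (r ^ (m / 2))⁻¹ = r ^ (m / 2) := by
      apply inv_eq_of_mul_eq_one_right
      rw [← pow_add]
      have h : m / 2 + m / 2 = m := by omega
      rw [h, hrm]
    have hcomm : s j * r ^ (m / 2) = r ^ (m / 2) * s j := by
      rw [hy, hsq]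
    refine ⟨r ^ (m / 2), fun L => ?_⟩
    rw [halt, halt]
    have hpar : Even (L + m) ↔ Even L := by
      simp [Nat.even_add, hme]
    have hdiv : (L + m) / 2 = L / 2 + m / 2 := by omega
    by_cases hL : Even L
    · rw [if_pos hL, if_pos (hpar.mpr hL), one_mul, one_mul, hdiv, pow_add, ← pow_add,
        Nat.add_comm (L / 2), pow_add]
    · rw [if_neg hL, if_neg (fun hh => hL (hpar.mp hh)), hdiv, Nat.add_comm (L / 2) (m / 2),
        pow_add, ← mul_assoc, hcomm, mul_assoc]
  · -- m odd
    have hm2 : m % 2 = 1 := Nat.odd_iff.mp hmo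
    refine ⟨r ^ ((m + 1) / 2) * s j, fun L => ?_⟩
    rw [halt, halt]
    have hpar : Even (L + m) ↔ ¬ Even L := by
      rw [Nat.even_add]
      simp [Nat.even_iff, hm2]
    by_cases hL : Even L
    · have hLm : ¬ Even (L + m) := by rw [hpar]; exact fun h => h hL
      rw [if_pos hL, if_neg hLm, one_mul]
      have hL2 : L % 2 = 0 := Nat.even_iff.mp hL
      set A := (L + m) / 2 with hA
      set C := L / 2 with hC
      have key : r ^ A * r ^ ((m+1)/2) = r ^ C := by
        rw [← pow_add]
        have h : A + (m + 1) / 2 = m + C := by omega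
        rw [h, pow_add, hrm, one_mul]
      have hq : r ^ ((m+1)/2) * (r ^ C)⁻¹ = (r ^ A)⁻¹ := by
        rw [← key]
        group
      rw [hy A, mul_assoc, hy C, ← mul_assoc, hq]
    · have hLm : Even (L + m) := hpar.mpr hL
      rw [if_neg hL, if_pos hLm, one_mul, ← mul_assoc]
      rw [mul_assoc (r ^ ((m+1)/2)) (s j) (s j), cs.simple_mul_simple_self, mul_one]
      rw [← pow_add]
      congr 1
      have hL2 : L % 2 = 1 := Nat.odd_iff.mp (Nat.odd_iff.mpr (by
        rcases Nat.even_or_odd L with h | h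
        · exact absurd h hL
        · exact Nat.odd_iff.mp h))
      omega

lemma ris_alternatingWord (i j : B) (n : ℕ) :
    ris (alternatingWord i j n)
      = ((range n).reverse).map
          (fun L => (π (alternatingWord i j L))⁻¹ * π (alternatingWord i j (L + 1))) := by
  induction n with
  | zero => simp [alternatingWord, rightInvSeq]
  | succ n ih =>
      rw [alternatingWord_succ' i j n, ris_cons, ih, range_succ, reverse_append, reverse_singleton,
        singleton_append, map_cons]
      congr 1
      rw [alternatingWord_succ' i j n, cs.wordProd_cons, ← mul_assoc]

lemma count_ris_relationWord_even (i j : B) (t : W) :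
    Even ((ris (alternatingWord i j (2 * M i j))).count t) := by
  obtain ⟨q, hq⟩ := exists_left_factor cs i j
  rw [ris_alternatingWord]
  set f : ℕ → W := fun L => (π (alternatingWord i j L))⁻¹ * π (alternatingWord i j (L + 1))
    with hf
  rw [map_reverse, count_reverse]
  have h2m : 2 * M i j = M i j + M i j := by ring
  rw [h2m, range_add, map_append, count_append, map_map]
  have hmap : ((range (M i j)).map (f ∘ fun x => M i j + x)) = (range (M i j)).map f := by
    apply map_congr_left
    intro a _
    show f (M i j + a) = f a
    rw [hf]
    simp only
    rw [Nat.add_comm (M i j) a]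
    rw [hq a, Nat.add_right_comm a (M i j) 1, hq (a + 1)]
    rw [mul_inv_rev]
    rw [mul_assoc, ← mul_assoc q⁻¹ q, inv_mul_cancel, one_mul]
  rw [hmap]
  exact ⟨((range (M i j)).map f).count t, rfl⟩

lemma isLiftable_perm : M.IsLiftable (perm cs) := by
  intro i j
  apply Equiv.ext
  rintro ⟨t, ε⟩
  rw [← prod_map_perm_alternatingWord, prod_map_perm_apply]
  have hπ : π (alternatingWord i j (2 * M i j)) = 1 := by
    rw [cs.prod_alternatingWord_eq_mul_pow, if_pos (even_two_mul _)]
    have h : 2 * M i j / 2 = M i j := by omega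
    rw [h, one_mul, cs.simple_mul_simple_pow]
  obtain ⟨c, hc⟩ := count_ris_relationWord_even cs i j t
  rw [hπ, hc, pow_add, Int.units_mul_self, one_mul, one_mul]
  simp

/-- The sign representation `W →* Perm (W × ℤˣ)`. -/
def csP : W →* Equiv.Perm (W × ℤˣ) := cs.lift ⟨perm cs, isLiftable_perm cs⟩

lemma csP_wordProd (ω : List B) : csP cs (π ω) = (List.map (perm cs) ω).prod := by
  show csP cs (List.prod (List.map cs.simple ω)) = _
  rw [MonoidHom.map_list_prod, map_map]
  congr 1
  apply map_congr_left
  intro i _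
  exact cs.lift_apply_simple (isLiftable_perm cs) i

lemma count_ris_parity (ω ω' : List B) (h : π ω = π ω') (t : W) :
    (-1 : ℤˣ) ^ ((ris ω).count t) = (-1 : ℤˣ) ^ ((ris ω').count t) := by
  have h1 := prod_map_perm_apply cs ω t 1
  have h2 := prod_map_perm_apply cs ω' t 1
  rw [← csP_wordProd] at h1 h2
  rw [h] at h1
  have := h1.symm.trans h2
  have hsnd := congrArg Prod.snd this
  simpa using hsnd

theorem exists_rightExchange {ω : List B} {i : B} (hred : cs.IsReduced ω)
    (h : ℓ (π ω * s i) < ℓ (π ω)) : ∃ j < ω.length, π ω * s i = π (ω.eraseIdx j) := by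
  have hmem : s i ∈ ris ω := by
    by_contra hn
    obtain ⟨κ, hκred, hκ⟩ := cs.exists_reduced_word' (π ω * s i)
    have hword : π (ω ++ [i]) = π κ := by
      rw [wordProd_append, cs.wordProd_singleton, ← hκ]
    have hpar := count_ris_parity cs (ω ++ [i]) κ hword (s i)
    have hcount1 : (ris (ω ++ [i])).count (s i) = 1 := by
      rw [ris_append, count_append]
      have h1 : (ris [i]).count (s i) = 1 := by
        show ((π ([] : List B))⁻¹ * s i * π ([] : List B) :: ris ([] : List B)).count (s i) = 1
        simp [rightInvSeq]
      have h2 : ((ris ω).map (fun t => (π [i])⁻¹ * t * π [i])).count (s i) = 0 := by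
        rw [count_eq_zero]
        intro hmem'
        obtain ⟨a, ha, hEq⟩ := mem_map.mp hmem'
        apply hn
        have ha' : a = s i := by
          rw [cs.wordProd_singleton, cs.inv_simple] at hEq
          exact (simple_conj_eq_iff cs i a).mp hEq
        rwa [ha'] at ha
      rw [h1, h2]
    have hoddκ : s i ∈ ris κ := by
      rw [← count_pos_iff]
      rcases Nat.eq_zero_or_pos ((ris κ).count (s i)) with h0 | h0
      · rw [hcount1, h0] at hpar
        simp at hpar
      · exact h0
    have hinv := (cs.isRightInversion_of_mem_rightInvSeq hκred hoddκ).2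
    rw [← hκ, mul_assoc, cs.simple_mul_simple_self, mul_one] at hinv
    omega
  obtain ⟨j, hj, hget⟩ := List.mem_iff_getElem.mp hmem
  have hjl : j < ω.length := by
    have := cs.length_rightInvSeq ω
    omega
  refine ⟨j, hjl, ?_⟩
  rw [← cs.wordProd_mul_getD_rightInvSeq ω j]
  congr 1
  rw [getD_eq_getElem (ris ω) 1 hj, hget]

theorem exists_reduced_subword : ∀ (n : ℕ) (ω : List B), ω.length ≤ n →
    ∃ ω' : List B, (∀ b ∈ ω', b ∈ ω) ∧ cs.IsReduced ω' ∧ π ω' = π ω := by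
  intro n
  induction n with
  | zero =>
      intro ω hlen
      have : ω = [] := List.eq_nil_of_length_eq_zero (Nat.le_zero.mp hlen)
      subst this
      exact ⟨[], by simp, by simp [CoxeterSystem.IsReduced], rfl⟩
  | succ n ih =>
      intro ω hlen
      by_cases hred : cs.IsReduced ω
      · exact ⟨ω, fun b hb => hb, hred, rfl⟩
      · classical
        have hPlen : ¬ cs.IsReduced (ω.take ω.length) := by rwa [take_length]
        have hexist : ∃ k, ¬ cs.IsReduced (ω.take k) := ⟨ω.length, hPlen⟩
        set k₀ := Nat.find hexist with hk₀
        have hk₀spec : ¬ cs.IsReduced (ω.take k₀) := Nat.find_spec hexist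
        have hk₀le : k₀ ≤ ω.length := Nat.find_min' _ hPlen
        have hk₀pos : 0 < k₀ := by
          rcases Nat.eq_zero_or_pos k₀ with h0 | h0
          · exfalso; apply hk₀spec; rw [h0]; simp [CoxeterSystem.IsReduced]
          · exact h0
        set k := k₀ - 1 with hk
        have hkk : k + 1 = k₀ := by omega
        have hkred : cs.IsReduced (ω.take k) := by
          by_contra hc
          have := Nat.find_min hexist (show k < k₀ by omega)
          exact this hc
        have hklen : k < ω.length := by omega
        have htake : ω.take (k + 1) = ω.take k ++ [ω[k]] := by
          rw [take_succ, getElem?_eq_getElem hklen]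
          rfl
        have hπsucc : π (ω.take (k + 1)) = π (ω.take k) * s (ω[k]) := by
          rw [htake, wordProd_append, cs.wordProd_singleton]
        have hlentake : (ω.take k).length = k := by
          rw [length_take]; omega
        have hlk : ℓ (π (ω.take k)) = k := by
          have := hkred; rwa [CoxeterSystem.IsReduced, hlentake] at this
        have hdesc : ℓ (π (ω.take k) * s (ω[k])) < ℓ (π (ω.take k)) := by
          rcases cs.length_mul_simple (π (ω.take k)) (ω[k]) with hup | hdown
          · exfalso
            apply hk₀spec
            rw [← hkk, CoxeterSystem.IsReduced, hπsucc, hup, hlk, length_take]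
            omega
          · omega
        obtain ⟨j, hj, hex⟩ := exists_rightExchange cs hkred hdesc
        set ω'' := (ω.take k).eraseIdx j ++ ω.drop (k + 1) with hω''
        have hπω'' : π ω'' = π ω := by
          rw [hω'', wordProd_append, ← hex, ← hπsucc, ← wordProd_append, take_append_drop]
        have hlenω'' : ω''.length ≤ n := by
          rw [hω'', length_append, length_eraseIdx]
          rw [hlentake] at hj ⊢
          simp only [if_pos hj]
          rw [length_drop]
          omega
        obtain ⟨ω', hsub, hred', hπ'⟩ := ih ω'' hlenω''
        refine ⟨ω', ?_, hred', by rw [hπ', hπω'']⟩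
        intro b hb
        rcases mem_append.mp (hsub b hb) with h | h
        · exact mem_of_mem_take (mem_of_mem_eraseIdx h)
        · exact mem_of_mem_drop h

theorem mem_closure_iff (X : Set B) (w : W) :
    w ∈ Subgroup.closure (cs.simple '' X) ↔
      ∃ ω : List B, (∀ b ∈ ω, b ∈ X) ∧ π ω = w := by
  constructor
  · intro hw
    induction hw using Subgroup.closure_induction with
    | mem x hx =>
        obtain ⟨b, hb, rfl⟩ := hx
        exact ⟨[b], by simpa using hb, by simp⟩
    | one => exact ⟨[], by simp, by simp⟩
    | mul x y _ _ ihx ihy =>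
        obtain ⟨ωx, hx1, hx2⟩ := ihx
        obtain ⟨ωy, hy1, hy2⟩ := ihy
        refine ⟨ωx ++ ωy, ?_, by rw [wordProd_append, hx2, hy2]⟩
        intro b hb
        rcases mem_append.mp hb with h | h
        · exact hx1 b h
        · exact hy1 b h
    | inv x _ ihx =>
        obtain ⟨ωx, hx1, hx2⟩ := ihx
        refine ⟨ωx.reverse, ?_, by rw [wordProd_reverse, hx2]⟩
        intro b hb
        exact hx1 b (mem_reverse.mp hb)
  · rintro ⟨ω, hsub, rfl⟩
    induction ω with
    | nil => simp only [wordProd_nil]; exact one_mem _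
    | cons i ω ih =>
        rw [cs.wordProd_cons]
        refine mul_mem ?_ (ih (fun b hb => hsub b (mem_cons_of_mem i hb)))
        exact Subgroup.subset_closure ⟨i, hsub i mem_cons_self, rfl⟩

theorem exists_reduced_word_mem (X : Set B) {w : W}
    (hw : w ∈ Subgroup.closure (cs.simple '' X)) :
    ∃ ω : List B, (∀ b ∈ ω, b ∈ X) ∧ cs.IsReduced ω ∧ π ω = w := by
  obtain ⟨ω, hsub, hπ⟩ := (mem_closure_iff cs X w).mp hw
  obtain ⟨ω', hsub', hred', hπ'⟩ := exists_reduced_subword cs ω.length ω le_rfl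
  exact ⟨ω', fun b hb => hsub b (hsub' b hb), hred', by rw [hπ', hπ]⟩

theorem exists_rightDescent_mem (X : Set B) {w : W}
    (hw : w ∈ Subgroup.closure (cs.simple '' X)) (hne : w ≠ 1) :
    ∃ i ∈ X, ℓ (w * s i) < ℓ w ∧ w * s i ∈ Subgroup.closure (cs.simple '' X) := by
  obtain ⟨ω, hsub, hred, hπ⟩ := exists_reduced_word_mem cs X hw
  rcases ω.eq_nil_or_concat with rfl | ⟨ω₀, i, rfl⟩
  · exact absurd (by rw [← hπ]; simp) hne
  rw [concat_eq_append] at hsub hred hπ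
  refine ⟨i, hsub i (by simp), ?_, ?_⟩
  · have hmul : w * s i = π ω₀ := by
      rw [← hπ, wordProd_append, cs.wordProd_singleton, mul_assoc,
        cs.simple_mul_simple_self, mul_one]
    rw [hmul]
    calc ℓ (π ω₀) ≤ ω₀.length := cs.length_wordProd_le _
      _ < (ω₀ ++ [i]).length := by simp
      _ = ℓ w := by rw [← hπ]; exact hred.symm
  · have hmul : w * s i = π ω₀ := by
      rw [← hπ, wordProd_append, cs.wordProd_singleton, mul_assoc,
        cs.simple_mul_simple_self, mul_one]
    rw [hmul]
    exact (mem_closure_iff cs X _).mpr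
      ⟨ω₀, fun b hb => hsub b (by simp [hb]), rfl⟩

theorem exists_decomp (Y : Set B) : ∀ (n : ℕ) (w : W), ℓ w ≤ n →
    ∃ a u : W, w = a * u ∧ u ∈ Subgroup.closure (cs.simple '' Y) ∧
      ℓ w = ℓ a + ℓ u ∧ ∀ i ∈ Y, ℓ a < ℓ (a * s i) := by
  intro n
  induction n with
  | zero =>
      intro w hlen
      have hw : w = 1 := cs.length_eq_zero_iff.mp (Nat.le_zero.mp hlen)
      subst hw
      refine ⟨1, 1, by simp, one_mem _, by simp, ?_⟩
      intro i _
      simp only [one_mul, cs.length_one, cs.length_simple]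
      omega
  | succ n ih =>
      intro w hlen
      by_cases h : ∀ i ∈ Y, ℓ w < ℓ (w * s i)
      · exact ⟨w, 1, by simp, one_mem _, by simp, h⟩
      · push_neg at h
        obtain ⟨i, hiY, hle⟩ := h
        have hne := cs.length_mul_simple_ne w i
        have hlt : ℓ (w * s i) < ℓ w := by omega
        have heq : ℓ (w * s i) + 1 = ℓ w := by
          rcases cs.length_mul_simple w i with h1 | h1
          · omega
          · exact h1
        obtain ⟨a, u, hdecomp, humem, hadd, hnd⟩ := ih (w * s i) (by omega)
        refine ⟨a, u * s i, ?_, mul_mem humem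
          (Subgroup.subset_closure ⟨i, hiY, rfl⟩), ?_, hnd⟩
        · rw [← mul_assoc, ← hdecomp, mul_assoc, cs.simple_mul_simple_self, mul_one]
        · have h1 : ℓ (u * s i) ≤ ℓ u + 1 := by
            have := cs.length_mul_le u (s i)
            rwa [cs.length_simple] at this
          have h2 : w = a * (u * s i) := by
            rw [← mul_assoc, ← hdecomp, mul_assoc, cs.simple_mul_simple_self, mul_one]
          have h3 : ℓ w ≤ ℓ a + ℓ (u * s i) := by
            rw [h2]; exact cs.length_mul_le a (u * s i)
          omega

theorem length_additive_aux (Y : Set B) : ∀ n : ℕ, ∀ a : W, ℓ a ≤ n →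
    (∀ i ∈ Y, ℓ a < ℓ (a * s i)) → ∀ m : ℕ, ∀ u : W,
      u ∈ Subgroup.closure (cs.simple '' Y) → ℓ u ≤ m → ℓ (a * u) = ℓ a + ℓ u := by
  intro n
  induction n with
  | zero =>
      intro a ha _ m u hu _
      have h1 : a = 1 := cs.length_eq_zero_iff.mp (Nat.le_zero.mp ha)
      subst h1; simp
  | succ n ihn =>
      intro a ha hnd m
      induction m with
      | zero =>
          intro u hu hum
          have h1 : u = 1 := cs.length_eq_zero_iff.mp (Nat.le_zero.mp hum)
          subst h1; simp
      | succ m ihm =>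
          intro u hu hum
          by_cases hu1 : u = 1
          · subst hu1; simp
          obtain ⟨y, hyY, hdesc, humem⟩ := exists_rightDescent_mem cs Y hu hu1
          have hu'u : u * s y * s y = u := by
            rw [mul_assoc, cs.simple_mul_simple_self, mul_one]
          have hlu'0 : ℓ (u * s y) + 1 = ℓ u := by
            rcases cs.length_mul_simple u y with h1 | h1
            · omega
            · exact h1
          set u' := u * s y with hu'def
          have hlu' : ℓ u' + 1 = ℓ u := hlu'0
          have hau' : ℓ (a * u') = ℓ a + ℓ u' := ihm u' humem (by omega)
          have hkey : ¬ (ℓ (a * u' * s y) < ℓ (a * u')) := by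
            intro hlt
            obtain ⟨α, hαred, hαπ⟩ := cs.exists_reduced_word' a
            obtain ⟨β, hβsub, hβred, hβπ⟩ := exists_reduced_word_mem cs Y humem
            have hαlen : ℓ a = α.length := by rw [hαπ]; exact hαred
            have hβlen : ℓ u' = β.length := by rw [← hβπ]; exact hβred
            have hcat : π (α ++ β) = a * u' := by rw [wordProd_append, ← hαπ, hβπ]
            have hcatred : cs.IsReduced (α ++ β) := by
              rw [CoxeterSystem.IsReduced, hcat, hau', length_append, hαlen, hβlen]
            obtain ⟨j, hjlen, hex⟩ := exists_rightExchange cs hcatred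
              (by rw [hcat]; exact hlt)
            rw [hcat] at hex
            rw [length_append] at hjlen
            rcases lt_or_ge j α.length with hj | hj
            · -- deletion in the α part
              rw [eraseIdx_append_of_lt_length hj] at hex
              set a' := π (α.eraseIdx j) with ha'def
              have hex' : a * u' * s y = a' * u' := by
                rw [hex, wordProd_append, ← hβπ]
              have hla' : ℓ a' + 1 ≤ ℓ a := by
                have h1 : ℓ a' ≤ (α.eraseIdx j).length := cs.length_wordProd_le _
                have h2 : (α.eraseIdx j).length + 1 = α.length :=
                  length_eraseIdx_add_one hj
                omega
              have hcmem : u' * s y * u'⁻¹ ∈ Subgroup.closure (cs.simple '' Y) :=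
                mul_mem (mul_mem humem (Subgroup.subset_closure ⟨y, hyY, rfl⟩))
                  (inv_mem humem)
              have hac : a * (u' * s y * u'⁻¹) = a' := by
                have h0 : a * (u' * s y * u'⁻¹) * u' = a' * u' := by
                  calc a * (u' * s y * u'⁻¹) * u' = a * u' * s y := by group
                    _ = a' * u' := hex'
                exact mul_right_cancel h0
              obtain ⟨a'', d, hdecomp, hdmem, hadd'', hnd''⟩ :=
                exists_decomp cs Y (ℓ a') a' le_rfl
              have hla'' : ℓ a'' ≤ n := by omega
              have hP2 : ∀ v, v ∈ Subgroup.closure (cs.simple '' Y) →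
                  ℓ (a'' * v) = ℓ a'' + ℓ v :=
                fun v hv => ihn a'' hla'' hnd'' (ℓ v) v hv le_rfl
              set e := d * (u' * s y * u'⁻¹)⁻¹ with hee
              have he : a = a'' * e := by
                rw [hee, ← mul_assoc, ← hdecomp, ← hac, mul_assoc, mul_inv_cancel, mul_one]
              have hemem : e ∈ Subgroup.closure (cs.simple '' Y) :=
                mul_mem hdmem (inv_mem hcmem)
              have hla : ℓ a = ℓ a'' + ℓ e := by rw [he]; exact hP2 e hemem
              have hene : e ≠ 1 := by
                intro h1
                rw [h1, mul_one] at he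
                rw [he] at hla'
                omega
              obtain ⟨y', hy'Y, hdesc', hmem'⟩ := exists_rightDescent_mem cs Y hemem hene
              have hcontra : ℓ (a * s y') < ℓ a := by
                have h5 : ℓ (a * s y') = ℓ a'' + ℓ (e * s y') := by
                  rw [he, mul_assoc]; exact hP2 (e * s y') hmem'
                omega
              have := hnd y' hy'Y
              omega
            · -- deletion in the β part
              rw [eraseIdx_append_of_length_le hj] at hex
              rw [wordProd_append, ← hαπ] at hex
              have hueq : u' * s y = π (β.eraseIdx (j - α.length)) := by
                have := hex
                rw [mul_assoc] at this
                exact mul_left_cancel this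
              have h1 : ℓ (u' * s y) ≤ (β.eraseIdx (j - α.length)).length := by
                rw [hueq]; exact cs.length_wordProd_le _
              have h2 : (β.eraseIdx (j - α.length)).length + 1 = β.length :=
                length_eraseIdx_add_one (by omega)
              have h3 : u' * s y = u := hu'u
              rw [h3] at h1
              omega
          rcases cs.length_mul_simple (a * u') y with h1 | h1
          · have hfin : a * u' * s y = a * u := by
              rw [hu'def, mul_assoc, mul_assoc, cs.simple_mul_simple_self, mul_one]
            rw [← hfin, h1, hau']
            omega
          · exfalso; exact hkey (by omega)

theorem length_additive (Y : Set B) {a : W} (hnd : ∀ i ∈ Y, ℓ a < ℓ (a * s i))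
    {u : W} (hu : u ∈ Subgroup.closure (cs.simple '' Y)) : ℓ (a * u) = ℓ a + ℓ u :=
  length_additive_aux cs Y (ℓ a) a le_rfl hnd (ℓ u) u hu le_rfl

end CoxDC

open CoxDC List

/-- In a Coxeter system `(W, S)`, if `σ` is the minimal-length element of the double coset
`W_X σ W_Y` of standard parabolic subgroups, then `W_X ∩ σW_Yσ⁻¹` is a standard parabolic
subgroup of `(W_X, X)`, and `ℓ(τσυ) = ℓ(τ) + ℓ(σ) + ℓ(υ)` for every minimal-length coset
representative `τ` of `W_X/(W_X ∩ σW_Yσ⁻¹)` and every `υ ∈ W_Y`. -/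
theorem coxeter_double_coset_reduced
    {I W : Type*} [Group W] (M : CoxeterMatrix I) (cs : CoxeterSystem M W)
    (X Y : Set I) (σ : W)
    (hσmin : ∀ x ∈ Subgroup.closure (cs.simple '' X),
      ∀ y ∈ Subgroup.closure (cs.simple '' Y),
        cs.length σ ≤ cs.length (x * σ * y)) :
    (∃ Z ⊆ X,
      Subgroup.closure (cs.simple '' X) ⊓
          (Subgroup.closure (cs.simple '' Y)).map (MulAut.conj σ).toMonoidHom =
        Subgroup.closure (cs.simple '' Z)) ∧
    (∀ τ ∈ Subgroup.closure (cs.simple '' X),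
      (∀ u ∈ Subgroup.closure (cs.simple '' X) ⊓
          (Subgroup.closure (cs.simple '' Y)).map (MulAut.conj σ).toMonoidHom,
        cs.length τ ≤ cs.length (τ * u)) →
      ∀ υ ∈ Subgroup.closure (cs.simple '' Y),
        cs.length (τ * σ * υ) = cs.length τ + cs.length σ + cs.length υ) := by
  letI : DecidableEq W := Classical.decEq W
  set WX := Subgroup.closure (cs.simple '' X) with hWX
  set WY := Subgroup.closure (cs.simple '' Y) with hWY
  -- σ has no right Y-descents and no left X-descents
  have hndY : ∀ i ∈ Y, cs.length σ < cs.length (σ * cs.simple i) := by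
    intro i hiY
    have h1 := hσmin 1 (one_mem _) (cs.simple i)
      (Subgroup.subset_closure ⟨i, hiY, rfl⟩)
    rw [one_mul] at h1
    have h2 := cs.length_mul_simple_ne σ i
    omega
  have hR1 : ∀ u ∈ WY, cs.length (σ * u) = cs.length σ + cs.length u :=
    fun u hu => length_additive cs Y hndY hu
  have hndXinv : ∀ i ∈ X, cs.length σ⁻¹ < cs.length (σ⁻¹ * cs.simple i) := by
    intro i hiX
    have hinv : (σ⁻¹ * cs.simple i)⁻¹ = cs.simple i * σ := by
      rw [mul_inv_rev, inv_inv, cs.inv_simple]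
    have h0 : cs.length (σ⁻¹ * cs.simple i) = cs.length (cs.simple i * σ) := by
      rw [← cs.length_inv, hinv]
    have h1 := hσmin (cs.simple i) (Subgroup.subset_closure ⟨i, hiX, rfl⟩) 1 (one_mem _)
    rw [mul_one] at h1
    have h2 := cs.length_simple_mul_ne σ i
    rw [cs.length_inv, h0]
    omega
  have hR2 : ∀ x ∈ WX, cs.length (x * σ) = cs.length x + cs.length σ := by
    intro x hx
    have h0 : cs.length (x * σ) = cs.length (σ⁻¹ * x⁻¹) := by
      rw [← cs.length_inv, mul_inv_rev]
    rw [h0, length_additive cs X hndXinv (inv_mem hx), cs.length_inv, cs.length_inv]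
    omega
  set Z : Set I := {i | i ∈ X ∧ ∃ j ∈ Y, σ⁻¹ * cs.simple i * σ = cs.simple j} with hZ
  -- Kilmoyer's induction
  have hkil : ∀ n : ℕ, ∀ w : W, cs.length w ≤ n → w ∈ WX →
      (∃ u ∈ WY, σ * u * σ⁻¹ = w) → w ∈ Subgroup.closure (cs.simple '' Z) := by
    intro n
    induction n with
    | zero =>
        intro w hlen _ _
        have h1 : w = 1 := cs.length_eq_zero_iff.mp (Nat.le_zero.mp hlen)
        rw [h1]; exact one_mem _
    | succ n ih =>
        rintro w hlen hwX ⟨u, huY, hconj⟩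
        by_cases hw1 : w = 1
        · rw [hw1]; exact one_mem _
        have hwinvne : w⁻¹ ≠ 1 := fun h => hw1 (by rwa [inv_eq_one] at h)
        obtain ⟨x, hxX, hdesc, hmemX⟩ :=
          exists_rightDescent_mem cs X (inv_mem hwX) hwinvne
        -- w' = s x * w
        have hw'mem : cs.simple x * w ∈ WX := by
          have := inv_mem hmemX
          rwa [mul_inv_rev, inv_inv, cs.inv_simple] at this
        have hlw' : cs.length (cs.simple x * w) < cs.length w := by
          have h0 : cs.length (cs.simple x * w) = cs.length (w⁻¹ * cs.simple x) := by
            rw [← cs.length_inv, mul_inv_rev, cs.inv_simple]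
          rw [h0, ← cs.length_inv w]
          exact hdesc
        have hwu : cs.length w = cs.length u := by
          have h1 : w * σ = σ * u := by rw [← hconj]; group
          have h2 := hR2 w hwX
          have h3 := hR1 u huY
          rw [h1, h3] at h2
          omega
        -- length of u⁻¹σ⁻¹ s x
        have hlen1 : cs.length (u⁻¹ * σ⁻¹ * cs.simple x) < cs.length (u⁻¹ * σ⁻¹) := by
          have e1 : (u⁻¹ * σ⁻¹ * cs.simple x)⁻¹ = cs.simple x * σ * u := by
            rw [mul_inv_rev, mul_inv_rev, inv_inv, inv_inv, cs.inv_simple, mul_assoc]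
          have e2 : cs.simple x * σ * u = (cs.simple x * w) * σ := by
            rw [← hconj]; group
          have e3 : cs.length (u⁻¹ * σ⁻¹ * cs.simple x)
              = cs.length (cs.simple x * w) + cs.length σ := by
            rw [← cs.length_inv, e1, e2, hR2 _ hw'mem]
          have e4 : cs.length (u⁻¹ * σ⁻¹) = cs.length σ + cs.length u := by
            rw [← cs.length_inv, mul_inv_rev, inv_inv, inv_inv, hR1 u huY]
          omega
        -- reduced words
        obtain ⟨β, hβsub, hβred, hβπ⟩ := exists_reduced_word_mem cs Y huY
        obtain ⟨ωσ, hσred, hσπ⟩ := cs.exists_reduced_word' σ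
        have hAred : cs.IsReduced β.reverse := (cs.isReduced_reverse_iff β).mpr hβred
        have hBred : cs.IsReduced ωσ.reverse := (cs.isReduced_reverse_iff ωσ).mpr hσred
        have hAπ : cs.wordProd β.reverse = u⁻¹ := by rw [cs.wordProd_reverse, hβπ]
        have hBπ : cs.wordProd ωσ.reverse = σ⁻¹ := by rw [cs.wordProd_reverse, ← hσπ]
        have hcatπ : cs.wordProd (β.reverse ++ ωσ.reverse) = u⁻¹ * σ⁻¹ := by
          rw [cs.wordProd_append, hAπ, hBπ]
        have hcatred : cs.IsReduced (β.reverse ++ ωσ.reverse) := by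
          rw [CoxeterSystem.IsReduced, hcatπ, length_append, length_reverse, length_reverse]
          have e4 : cs.length (u⁻¹ * σ⁻¹) = cs.length σ + cs.length u := by
            rw [← cs.length_inv, mul_inv_rev, inv_inv, inv_inv, hR1 u huY]
          have e5 : cs.length u = β.length := by rw [← hβπ]; exact hβred
          have e6 : cs.length σ = ωσ.length := by rw [hσπ]; exact hσred
          omega
        obtain ⟨j, hjlen, hex⟩ := exists_rightExchange cs hcatred
          (by rw [hcatπ]; exact hlen1)
        rw [hcatπ] at hex
        rw [length_append, length_reverse, length_reverse] at hjlen
        rcases lt_or_ge j β.reverse.length with hj | hj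
        · -- deletion in u-part: gives σ⁻¹ s x σ ∈ W_Y of length 1
          rw [eraseIdx_append_of_lt_length hj] at hex
          rw [cs.wordProd_append, hBπ] at hex
          set v : W := u * cs.wordProd (β.reverse.eraseIdx j) with hv
          have hveq : σ⁻¹ * cs.simple x * σ = v := by
            rw [hv]
            have := congrArg (fun z => u * z * σ) hex
            calc σ⁻¹ * cs.simple x * σ
                = u * (u⁻¹ * σ⁻¹ * cs.simple x) * σ := by group
              _ = u * (cs.wordProd (β.reverse.eraseIdx j) * σ⁻¹) * σ := by rw [hex]
              _ = u * cs.wordProd (β.reverse.eraseIdx j) := by group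
          have hvY : v ∈ WY := by
            refine mul_mem huY ((mem_closure_iff cs Y _).mpr
              ⟨β.reverse.eraseIdx j, ?_, rfl⟩)
            intro b hb
            exact hβsub b (mem_reverse.mp (mem_of_mem_eraseIdx hb))
          have hlv : cs.length v = 1 := by
            have e1 : σ * v = cs.simple x * σ := by rw [← hveq]; group
            have e2 := hR1 v hvY
            rw [e1] at e2
            have e3 : cs.length (cs.simple x * σ) = cs.length σ + 1 := by
              have h4 := hσmin (cs.simple x) (Subgroup.subset_closure ⟨x, hxX, rfl⟩)
                1 (one_mem _)
              rw [mul_one] at h4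
              rcases cs.length_simple_mul σ x with h5 | h5
              · omega
              · omega
            omega
          obtain ⟨γ, hγsub, hγred, hγπ⟩ := exists_reduced_word_mem cs Y hvY
          have hγlen : γ.length = 1 := by
            rw [CoxeterSystem.IsReduced, hγπ, hlv] at hγred
            omega
          obtain ⟨y, rfl⟩ : ∃ y, γ = [y] := by
            rcases γ with _ | ⟨y, γ'⟩
            · simp at hγlen
            · rcases γ' with _ | _
              · exact ⟨y, rfl⟩
              · simp at hγlen
          have hyY : y ∈ Y := hγsub y (by simp)
          have hvy : v = cs.simple y := by rw [← hγπ, cs.wordProd_singleton]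
          have hxZ : x ∈ Z := ⟨hxX, y, hyY, by rw [hveq, hvy]⟩
          -- recurse on s x * w
          have hrec : cs.simple x * w ∈ Subgroup.closure (cs.simple '' Z) := by
            apply ih (cs.simple x * w) (by omega) hw'mem
            refine ⟨v * u, mul_mem hvY huY, ?_⟩
            calc σ * (v * u) * σ⁻¹ = (σ * v) * u * σ⁻¹ := by group
              _ = (cs.simple x * σ) * u * σ⁻¹ := by rw [← hveq]; group
              _ = cs.simple x * (σ * u * σ⁻¹) := by group
              _ = cs.simple x * w := by rw [hconj]
          have : w = cs.simple x * (cs.simple x * w) := by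
            rw [← mul_assoc, cs.simple_mul_simple_self, one_mul]
          rw [this]
          exact mul_mem (Subgroup.subset_closure ⟨x, hxZ, rfl⟩) hrec
        · -- deletion in σ-part: contradiction with minimality
          exfalso
          rw [eraseIdx_append_of_length_le hj] at hex
          rw [cs.wordProd_append, hAπ] at hex
          have hcancel : σ⁻¹ * cs.simple x
              = cs.wordProd (ωσ.reverse.eraseIdx (j - β.reverse.length)) := by
            have := hex
            rw [mul_assoc] at this
            exact mul_left_cancel this
          have h1 : cs.length (σ⁻¹ * cs.simple x)
              ≤ (ωσ.reverse.eraseIdx (j - β.reverse.length)).length := by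
            rw [hcancel]; exact cs.length_wordProd_le _
          have h6 : ωσ.reverse.length = ωσ.length := length_reverse
          have h7 : β.reverse.length = β.length := length_reverse
          have h2 : (ωσ.reverse.eraseIdx (j - β.reverse.length)).length + 1
              = ωσ.reverse.length := by
            apply length_eraseIdx_add_one
            omega
          have h3 : cs.length (σ⁻¹ * cs.simple x) = cs.length (cs.simple x * σ) := by
            rw [← cs.length_inv, mul_inv_rev, inv_inv, cs.inv_simple]
          have h4 := hσmin (cs.simple x) (Subgroup.subset_closure ⟨x, hxX, rfl⟩) 1 (one_mem _)
          rw [mul_one] at h4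
          have h5 : cs.length σ = ωσ.length := by rw [hσπ]; exact hσred
          omega
  constructor
  · -- Part 1: the intersection is the parabolic on Z
    refine ⟨Z, fun i hi => hi.1, ?_⟩
    apply _root_.le_antisymm
    · rintro w ⟨hw1, hw2⟩
      obtain ⟨u, huY, hconj⟩ := Subgroup.mem_map.mp hw2
      refine hkil (cs.length w) w le_rfl hw1 ⟨u, huY, ?_⟩
      rw [← hconj]
      rfl
    · rw [Subgroup.closure_le]
      rintro _ ⟨i, hiZ, rfl⟩
      obtain ⟨hiX, y, hyY, heq⟩ := hiZ
      refine Subgroup.mem_inf.mpr ⟨?_, ?_⟩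
      · exact Subgroup.subset_closure ⟨i, hiX, rfl⟩
      · apply Subgroup.mem_map.mpr
        refine ⟨cs.simple y, Subgroup.subset_closure ⟨y, hyY, rfl⟩, ?_⟩
        show MulAut.conj σ (cs.simple y) = cs.simple i
        rw [MulAut.conj_apply, ← heq]
        group
  · -- Part 2: lengths add
    intro τ hτ hmin υ hυ
    have hτσ : cs.length (τ * σ) = cs.length τ + cs.length σ := hR2 τ hτ
    have hnd2 : ∀ i ∈ Y, cs.length (τ * σ) < cs.length (τ * σ * cs.simple i) := by
      intro y hyY
      by_contra hc
      have hne := cs.length_mul_simple_ne (τ * σ) y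
      have hlt : cs.length (τ * σ * cs.simple y) < cs.length (τ * σ) := by omega
      obtain ⟨α, hαsub, hαred, hαπ⟩ := exists_reduced_word_mem cs X hτ
      obtain ⟨ωσ, hσred, hσπ⟩ := cs.exists_reduced_word' σ
      have hcatπ : cs.wordProd (α ++ ωσ) = τ * σ := by
        rw [cs.wordProd_append, hαπ, ← hσπ]
      have hαlen : cs.length τ = α.length := by rw [← hαπ]; exact hαred
      have hσlen : cs.length σ = ωσ.length := by rw [hσπ]; exact hσred
      have hcatred : cs.IsReduced (α ++ ωσ) := by
        rw [CoxeterSystem.IsReduced, hcatπ, length_append]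
        omega
      obtain ⟨j, hjlen, hex⟩ := exists_rightExchange cs hcatred
        (by rw [hcatπ]; exact hlt)
      rw [hcatπ] at hex
      rw [length_append] at hjlen
      rcases lt_or_ge j α.length with hj | hj
      · rw [eraseIdx_append_of_lt_length hj] at hex
        rw [cs.wordProd_append, ← hσπ] at hex
        set τ' := cs.wordProd (α.eraseIdx j) with hτ'
        have hτ'X : τ' ∈ Subgroup.closure (cs.simple '' X) :=
          (mem_closure_iff cs X _).mpr
            ⟨α.eraseIdx j, fun b hb => hαsub b (mem_of_mem_eraseIdx hb), rfl⟩
        have hτd : τ * (σ * cs.simple y * σ⁻¹) = τ' := by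
          have h0 : τ * (σ * cs.simple y * σ⁻¹) * σ = τ' * σ := by
            calc τ * (σ * cs.simple y * σ⁻¹) * σ = τ * σ * cs.simple y := by group
              _ = τ' * σ := hex
          exact mul_right_cancel h0
        have hdmem : σ * cs.simple y * σ⁻¹ ∈ Subgroup.closure (cs.simple '' X) ⊓
            (Subgroup.closure (cs.simple '' Y)).map (MulAut.conj σ).toMonoidHom := by
          refine Subgroup.mem_inf.mpr ⟨?_, ?_⟩
          · have : σ * cs.simple y * σ⁻¹ = τ⁻¹ * τ' := by rw [← hτd]; group
            rw [this]
            exact mul_mem (inv_mem hτ) hτ'X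
          · apply Subgroup.mem_map.mpr
            exact ⟨cs.simple y, Subgroup.subset_closure ⟨y, hyY, rfl⟩, rfl⟩
        have hmind := hmin _ hdmem
        rw [hτd] at hmind
        have h1 : cs.length τ' ≤ (α.eraseIdx j).length := cs.length_wordProd_le _
        have h2 : (α.eraseIdx j).length + 1 = α.length := length_eraseIdx_add_one hj
        omega
      · rw [eraseIdx_append_of_length_le hj] at hex
        rw [cs.wordProd_append, hαπ] at hex
        have hcancel : σ * cs.simple y = cs.wordProd (ωσ.eraseIdx (j - α.length)) := by
          have := hex
          rw [mul_assoc] at this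
          exact mul_left_cancel this
        have h1 : cs.length (σ * cs.simple y) ≤ (ωσ.eraseIdx (j - α.length)).length := by
          rw [hcancel]; exact cs.length_wordProd_le _
        have h2 : (ωσ.eraseIdx (j - α.length)).length + 1 = ωσ.length :=
          length_eraseIdx_add_one (by omega)
        have h3 := hσmin 1 (one_mem _) (cs.simple y) (Subgroup.subset_closure ⟨y, hyY, rfl⟩)
        rw [one_mul] at h3
        omega
    have := length_additive cs Y hnd2 hυ
    rw [this, hτσ]
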